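/- Let x̄ ∈ ℝⁿ be an equilibrium of the weighted Krause model with positive weights w_1,…,w_n. Suppose that for every pair of distinct clusters a, b of x̄ with weights W_a and W_b, the following holds: either W_a = W_b and |a − b| ≥ 2, or W_a ≠ W_b and |a − b| > 1 + min(W_a, W_b)/max(W_a, W_b). Then x̄ is stable with respect to the addition of a perturbing agent, i.e., sup_{x̃₀ ∈ ℝ} Δ(x̃₀, δ) → 0 as δ → 0⁺. -/

import Mathlib

open Filter

/-- One step of the weighted Krause model. -/
noncomputable def wKrauseUpdate {n : ℕ} (w : Fin n → ℝ) (x : Fin n → ℝ) :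
    Fin n → ℝ := fun i =>
  (∑ j ∈ Finset.univ.filter (fun j => |x i - x j| < 1), w j * x j) /
  (∑ j ∈ Finset.univ.filter (fun j => |x i - x j| < 1), w j)

/-- Trajectory of the weighted Krause model. -/
noncomputable def wKrauseTraj {n : ℕ} (w : Fin n → ℝ) (x0 : Fin n → ℝ) (t : ℕ) :
    Fin n → ℝ := (wKrauseUpdate w)^[t] x0

/-- The weight of the cluster of `xbar` at value `c`. -/
noncomputable def clusterWeight {n : ℕ} (w : Fin n → ℝ) (xbar : Fin n → ℝ)
    (c : ℝ) : ℝ := ∑ i ∈ Finset.univ.filter (fun i => xbar i = c), w i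

/-- Limiting opinion of original agent `i` after adding a perturbing agent of
weight `δ` and initial opinion `x0` to the equilibrium `xbar`. -/
noncomputable def perturbedLimit {n : ℕ} (w : Fin n → ℝ) (xbar : Fin n → ℝ)
    (x0 δ : ℝ) (i : Fin n) : ℝ :=
  limUnder atTop (fun t => wKrauseTraj (Fin.cons δ w) (Fin.cons x0 xbar) t i.succ)

/-- The distance `Δ(x̃₀, δ)` between the original equilibrium and the perturbed
equilibrium. -/
noncomputable def perturbDelta {n : ℕ} (w : Fin n → ℝ) (xbar : Fin n → ℝ)
    (x0 δ : ℝ) : ℝ := ∑ i, w i * |xbar i - perturbedLimit w xbar x0 δ i|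

/-- Stability of an equilibrium with respect to the addition of a perturbing
agent: `sup_{x̃₀} Δ(x̃₀, δ) → 0` as `δ → 0⁺`. -/
def IsStableEquilibrium {n : ℕ} (w : Fin n → ℝ) (xbar : Fin n → ℝ) : Prop :=
  Tendsto (fun δ : ℝ => ⨆ x0 : ℝ, perturbDelta w xbar x0 δ)
    (nhdsWithin 0 (Set.Ioi 0)) (nhds 0)

/-- A configuration in which every pair of agents is either equal or ≥ 1 apart. -/
def EqCfg {N : ℕ} (x : Fin N → ℝ) : Prop := ∀ i j, x i = x j ∨ 1 ≤ |x i - x j|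

lemma update_apply {N : ℕ} (W X : Fin N → ℝ) (k : Fin N) :
    wKrauseUpdate W X k =
      (∑ j, if |X k - X j| < 1 then W j * X j else 0) /
      (∑ j, if |X k - X j| < 1 then W j else 0) := by
  simp [wKrauseUpdate, Finset.sum_filter]

lemma update_eq_of_eqCfg {N : ℕ} (W X : Fin N → ℝ) (hW : ∀ i, 0 < W i)
    (h : EqCfg X) : wKrauseUpdate W X = X := by
  funext k
  rw [update_apply]
  have hiff : ∀ j, (|X k - X j| < 1) ↔ X j = X k := by
    intro j
    constructor
    · intro hj
      rcases h k j with h1 | h1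
      · exact h1.symm
      · linarith
    · intro hj; simp [hj]
  have h1 : (∑ j, if |X k - X j| < 1 then W j * X j else 0)
      = X k * ∑ j, if |X k - X j| < 1 then W j else 0 := by
    rw [Finset.mul_sum]
    refine Finset.sum_congr rfl fun j _ => ?_
    by_cases hj : |X k - X j| < 1
    · rw [if_pos hj, if_pos hj, (hiff j).1 hj]; ring
    · simp [hj]
  have h2 : 0 < ∑ j, if |X k - X j| < 1 then W j else 0 := by
    refine Finset.sum_pos' (fun j _ => ?_) ⟨k, Finset.mem_univ k, ?_⟩
    · by_cases hj : |X k - X j| < 1 <;> simp [hj, (hW j).le]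
    · simp [hW k]
  rw [h1, mul_div_assoc, div_self h2.ne', mul_one]

lemma traj_const_of_eqCfg {N : ℕ} (W : Fin N → ℝ) (hW : ∀ i, 0 < W i)
    (x0 : Fin N → ℝ) (T : ℕ) (h : EqCfg (wKrauseTraj W x0 T)) :
    ∀ t, T ≤ t → wKrauseTraj W x0 t = wKrauseTraj W x0 T := by
  intro t ht
  obtain ⟨s, rfl⟩ := Nat.exists_eq_add_of_le ht
  induction s with
  | zero => rfl
  | succ s ih =>
    have : wKrauseTraj W x0 (T + (s+1)) = wKrauseUpdate W (wKrauseTraj W x0 (T + s)) := by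
      show (wKrauseUpdate W)^[T + s + 1] x0 = _
      rw [Function.iterate_succ_apply']
      rfl
    rw [this, ih (Nat.le_add_right _ _), update_eq_of_eqCfg W _ hW h]

section ConsCalc
variable {n : ℕ} (δ y : ℝ) (w u : Fin n → ℝ)

lemma update_cons_succ (i : Fin n) :
    wKrauseUpdate (Fin.cons δ w) (Fin.cons y u : Fin (n+1) → ℝ) i.succ =
      ((if |u i - y| < 1 then δ * y else 0) +
        ∑ j, if |u i - u j| < 1 then w j * u j else 0) /
      ((if |u i - y| < 1 then δ else 0) +
        ∑ j, if |u i - u j| < 1 then w j else 0) := by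
  rw [update_apply]
  rw [Fin.sum_univ_succ, Fin.sum_univ_succ]
  simp only [Fin.cons_zero, Fin.cons_succ]

lemma update_cons_zero :
    wKrauseUpdate (Fin.cons δ w) (Fin.cons y u : Fin (n+1) → ℝ) 0 =
      (δ * y + ∑ j, if |y - u j| < 1 then w j * u j else 0) /
      (δ + ∑ j, if |y - u j| < 1 then w j else 0) := by
  rw [update_apply]
  rw [Fin.sum_univ_succ, Fin.sum_univ_succ]
  simp only [Fin.cons_zero, Fin.cons_succ, sub_self, abs_zero, if_pos zero_lt_one]

end ConsCalc

section ClusterSums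
variable {n : ℕ} (w xbar : Fin n → ℝ)

/-- Sum over agents whose predicate on values holds, when the predicate picks
out exactly the single cluster value `a` among attained values. -/
lemma cluster_sum_one (F : Fin n → ℝ) (G : ℝ → ℝ) (P : ℝ → Prop) [DecidablePred P]
    (a : ℝ) (h : ∀ v, (∃ i, xbar i = v) → (P v ↔ v = a)) :
    ∑ j, (if P (xbar j) then F j * G (xbar j) else 0)
      = (∑ j, if xbar j = a then F j else 0) * G a := by
  rw [Finset.sum_mul]
  refine Finset.sum_congr rfl fun j _ => ?_
  by_cases hj : xbar j = a
  · rw [if_pos hj, if_pos ((h (xbar j) ⟨j, rfl⟩).2 hj), hj]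
  · rw [if_neg hj, if_neg (fun hp => hj ((h (xbar j) ⟨j, rfl⟩).1 hp)), zero_mul]

lemma cluster_sum_none (F : Fin n → ℝ) (P : ℝ → Prop) [DecidablePred P]
    (h : ∀ v, (∃ i, xbar i = v) → ¬ P v) :
    ∑ j, (if P (xbar j) then F j else 0) = 0 := by
  refine Finset.sum_eq_zero fun j _ => ?_
  rw [if_neg (h (xbar j) ⟨j, rfl⟩)]

lemma cluster_sum_two (F : Fin n → ℝ) (G : ℝ → ℝ) (P : ℝ → Prop) [DecidablePred P]
    (a b : ℝ) (hab : a ≠ b) (h : ∀ v, (∃ i, xbar i = v) → (P v ↔ v = a ∨ v = b)) :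
    ∑ j, (if P (xbar j) then F j * G (xbar j) else 0)
      = (∑ j, if xbar j = a then F j else 0) * G a
        + (∑ j, if xbar j = b then F j else 0) * G b := by
  rw [Finset.sum_mul, Finset.sum_mul, ← Finset.sum_add_distrib]
  refine Finset.sum_congr rfl fun j _ => ?_
  by_cases hja : xbar j = a
  · have hpj : P (xbar j) := (h _ ⟨j, rfl⟩).2 (Or.inl hja)
    have hjb : xbar j ≠ b := by rw [hja]; exact hab
    rw [if_pos hpj, if_pos hja, if_neg hjb, hja]; ring
  · by_cases hjb : xbar j = b
    · have hpj : P (xbar j) := (h _ ⟨j, rfl⟩).2 (Or.inr hjb)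
      rw [if_pos hpj, if_neg hja, if_pos hjb, hjb]; ring
    · have hpj : ¬ P (xbar j) := fun hp => by
        rcases (h _ ⟨j, rfl⟩).1 hp with h'|h' <;> [exact hja h'; exact hjb h']
      rw [if_neg hpj, if_neg hja, if_neg hjb]; ring

lemma clusterWeight_eq_sum_ite (a : ℝ) :
    clusterWeight w xbar a = ∑ j, if xbar j = a then w j else 0 := by
  rw [clusterWeight, Finset.sum_filter]

lemma clusterWeight_pos (hw : ∀ i, 0 < w i) (a : ℝ) (ha : ∃ i, xbar i = a) :
    0 < clusterWeight w xbar a := by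
  obtain ⟨i, hi⟩ := ha
  rw [clusterWeight_eq_sum_ite]
  refine Finset.sum_pos' (fun j _ => ?_) ⟨i, Finset.mem_univ i, ?_⟩
  · by_cases hj : xbar j = a <;> simp [hj, (hw j).le]
  · simp [hi, hw i]

end ClusterSums

section Merge
variable {n : ℕ}

lemma cluster_sum_one' (w u : Fin n → ℝ) (P : ℝ → Prop) [DecidablePred P]
    (c : ℝ) (h : ∀ v, (∃ i, u i = v) → (P v ↔ v = c)) :
    ∑ j, (if P (u j) then w j else 0) = clusterWeight w u c := by
  have := cluster_sum_one u w (fun _ => (1:ℝ)) P c h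
  simpa [clusterWeight_eq_sum_ite] using this

lemma cluster_sum_one'' (w u : Fin n → ℝ) (P : ℝ → Prop) [DecidablePred P]
    (c : ℝ) (h : ∀ v, (∃ i, u i = v) → (P v ↔ v = c)) :
    ∑ j, (if P (u j) then w j * u j else 0) = clusterWeight w u c * c := by
  have := cluster_sum_one u w (fun v => v) P c h
  simpa [clusterWeight_eq_sum_ite] using this

/-- If the perturber at `y` sees exactly the cluster at value `c` (among the
agents `u`, which form an equilibrium configuration), then in one step the
perturber and that cluster merge at `M` and nothing else moves. -/
lemma merge_step (w u : Fin n → ℝ) (hw : ∀ i, 0 < w i) (δ y c : ℝ) (hδ : 0 < δ)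
    (h1 : ∀ j, |y - u j| < 1 ↔ u j = c)
    (h2 : ∀ i j, u i = u j ∨ 1 ≤ |u i - u j|) :
    wKrauseUpdate (Fin.cons δ w) (Fin.cons y u : Fin (n+1) → ℝ) =
      Fin.cons ((δ * y + clusterWeight w u c * c) / (δ + clusterWeight w u c))
        (fun j => if u j = c then
          (δ * y + clusterWeight w u c * c) / (δ + clusterWeight w u c)
          else u j) := by
  set CW := clusterWeight w u c with hCW
  set M := (δ * y + CW * c) / (δ + CW) with hM
  have hchar : ∀ v, (∃ i, u i = v) → ((|y - v| < 1) ↔ v = c) := by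
    rintro v ⟨i, rfl⟩; exact h1 i
  funext k
  refine Fin.cases ?_ ?_ k
  · rw [update_cons_zero, Fin.cons_zero,
      cluster_sum_one'' w u _ c hchar, cluster_sum_one' w u _ c hchar]
  · intro i
    rw [update_cons_succ, Fin.cons_succ]
    by_cases hic : u i = c
    · have hy : |u i - y| < 1 := by rw [abs_sub_comm]; exact (h1 i).2 hic
      have hchar2 : ∀ v, (∃ j, u j = v) → ((|u i - v| < 1) ↔ v = c) := by
        rintro v ⟨j, rfl⟩
        constructor
        · intro hlt
          rcases h2 i j with h' | h'
          · rw [← h', hic]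
          · linarith
        · intro hv; rw [hv, ← hic]; simp
      rw [if_pos hy, if_pos hy, if_pos hic,
        cluster_sum_one'' w u _ c hchar2, cluster_sum_one' w u _ c hchar2]
    · have hy : ¬ (|u i - y| < 1) := by
        rw [abs_sub_comm]; intro h'; exact hic ((h1 i).1 h')
      have hchar2 : ∀ v, (∃ j, u j = v) → ((|u i - v| < 1) ↔ v = u i) := by
        rintro v ⟨j, rfl⟩
        constructor
        · intro hlt
          rcases h2 i j with h' | h'
          · exact h'.symm
          · linarith
        · intro hv; rw [hv]; simp
      rw [if_neg hy, if_neg hy, if_neg hic,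
        cluster_sum_one'' w u _ (u i) hchar2, cluster_sum_one' w u _ (u i) hchar2]
      have hpos : 0 < clusterWeight w u (u i) := clusterWeight_pos w u hw _ ⟨i, rfl⟩
      rw [zero_add, zero_add, mul_comm, mul_div_assoc, div_self hpos.ne', mul_one]
end Merge

section Neg
variable {N : ℕ}

lemma update_neg (W X : Fin N → ℝ) :
    wKrauseUpdate W (fun i => -(X i)) = fun i => -(wKrauseUpdate W X i) := by
  funext k
  rw [update_apply, update_apply]
  have h1 : ∀ j : Fin N, |-(X k) - -(X j)| = |X k - X j| := by
    intro j; rw [← abs_neg]; ring_nf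
  simp only [h1]
  rw [← neg_div, ← Finset.sum_neg_distrib]
  congr 1
  refine Finset.sum_congr rfl fun j _ => ?_
  by_cases hj : |X k - X j| < 1 <;> simp [hj]

lemma eqCfg_neg (X : Fin N → ℝ) (h : EqCfg X) : EqCfg (fun i => -(X i)) := by
  intro i j
  rcases h i j with h' | h'
  · exact Or.inl (by simp only []; rw [h'])
  · refine Or.inr ?_
    simp only []
    rw [show -X i - -X j = -(X i - X j) by ring, abs_neg]; exact h'

lemma clusterWeight_neg (w X : Fin N → ℝ) (c : ℝ) :
    clusterWeight w (fun i => -(X i)) (-c) = clusterWeight w X c := by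
  unfold clusterWeight
  congr 1
  apply Finset.filter_congr
  intro i _
  simp [neg_eq_iff_eq_neg]

end Neg

section TwoCluster
variable {n : ℕ}

lemma cluster_sum_two_w (w u : Fin n → ℝ) (P : ℝ → Prop) [DecidablePred P]
    (a b : ℝ) (hab : a ≠ b) (h : ∀ v, (∃ i, u i = v) → (P v ↔ v = a ∨ v = b)) :
    ∑ j, (if P (u j) then w j else 0) = clusterWeight w u a + clusterWeight w u b := by
  have := cluster_sum_two u w (fun _ => (1:ℝ)) P a b hab h
  simpa [clusterWeight_eq_sum_ite] using this

lemma cluster_sum_two_wx (w u : Fin n → ℝ) (P : ℝ → Prop) [DecidablePred P]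
    (a b : ℝ) (hab : a ≠ b) (h : ∀ v, (∃ i, u i = v) → (P v ↔ v = a ∨ v = b)) :
    ∑ j, (if P (u j) then w j * u j else 0)
      = clusterWeight w u a * a + clusterWeight w u b * b := by
  have := cluster_sum_two u w (fun v => v) P a b hab h
  simpa [clusterWeight_eq_sum_ite] using this

/-- Step 1 of the two-visible-clusters case. -/
lemma two_cluster_step1 (w xbar : Fin n → ℝ) (hw : ∀ i, 0 < w i) (δ x0 a b : ℝ)
    (hab : a ≠ b)
    (hgap : ∀ u v, (∃ i, xbar i = u) → (∃ i, xbar i = v) → u ≠ v → 1 < |u - v|)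
    (hvisA : |x0 - a| < 1) (hvisB : |x0 - b| < 1)
    (hA : ∃ i, xbar i = a) (hB : ∃ i, xbar i = b)
    (hinvis : ∀ v, (∃ i, xbar i = v) → v ≠ a → v ≠ b → 1 ≤ |x0 - v|) :
    wKrauseUpdate (Fin.cons δ w) (Fin.cons x0 xbar : Fin (n+1) → ℝ) =
      Fin.cons
        ((δ * x0 + (clusterWeight w xbar a * a + clusterWeight w xbar b * b)) /
          (δ + (clusterWeight w xbar a + clusterWeight w xbar b)))
        (fun j => if xbar j = a
          then (δ * x0 + clusterWeight w xbar a * a) / (δ + clusterWeight w xbar a)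
          else if xbar j = b
          then (δ * x0 + clusterWeight w xbar b * b) / (δ + clusterWeight w xbar b)
          else xbar j) := by
  funext k
  refine Fin.cases ?_ ?_ k
  · rw [update_cons_zero, Fin.cons_zero]
    have hchar : ∀ v, (∃ i, xbar i = v) → ((|x0 - v| < 1) ↔ v = a ∨ v = b) := by
      intro v hv
      constructor
      · intro hlt
        by_contra hcon
        push_neg at hcon
        exact absurd (hinvis v hv hcon.1 hcon.2) (by linarith)
      · rintro (rfl | rfl) <;> assumption
    rw [cluster_sum_two_wx w xbar _ a b hab hchar, cluster_sum_two_w w xbar _ a b hab hchar]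
  · intro i
    rw [update_cons_succ, Fin.cons_succ]
    by_cases hia : xbar i = a
    · have hy : |xbar i - x0| < 1 := by rw [hia, abs_sub_comm]; exact hvisA
      have hchar : ∀ v, (∃ j, xbar j = v) → ((|xbar i - v| < 1) ↔ v = a) := by
        intro v hv
        constructor
        · intro hlt
          by_contra hva
          have := hgap (xbar i) v ⟨i, rfl⟩ hv (fun h => hva (by rw [← h, hia]))
          linarith
        · intro hv'; rw [hv', ← hia]; simp
      rw [if_pos hy, if_pos hy, if_pos hia,
        cluster_sum_one'' w xbar _ a hchar, cluster_sum_one' w xbar _ a hchar]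
    · by_cases hib : xbar i = b
      · have hy : |xbar i - x0| < 1 := by rw [hib, abs_sub_comm]; exact hvisB
        have hchar : ∀ v, (∃ j, xbar j = v) → ((|xbar i - v| < 1) ↔ v = b) := by
          intro v hv
          constructor
          · intro hlt
            by_contra hvb
            have := hgap (xbar i) v ⟨i, rfl⟩ hv (fun h => hvb (by rw [← h, hib]))
            linarith
          · intro hv'; rw [hv', ← hib]; simp
        rw [if_pos hy, if_pos hy, if_neg hia, if_pos hib,
          cluster_sum_one'' w xbar _ b hchar, cluster_sum_one' w xbar _ b hchar]
      · have hy : ¬ (|xbar i - x0| < 1) := by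
          rw [abs_sub_comm]
          exact not_lt.2 (hinvis (xbar i) ⟨i, rfl⟩ hia hib)
        have hchar : ∀ v, (∃ j, xbar j = v) → ((|xbar i - v| < 1) ↔ v = xbar i) := by
          intro v hv
          constructor
          · intro hlt
            by_contra hv'
            have := hgap (xbar i) v ⟨i, rfl⟩ hv (fun h => hv' h.symm)
            linarith
          · intro hv'; rw [hv']; simp
        rw [if_neg hy, if_neg hy, if_neg hia, if_neg hib,
          cluster_sum_one'' w xbar _ (xbar i) hchar, cluster_sum_one' w xbar _ (xbar i) hchar]
        have hpos : 0 < clusterWeight w xbar (xbar i) :=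
          clusterWeight_pos w xbar hw _ ⟨i, rfl⟩
        rw [zero_add, zero_add, mul_comm, mul_div_assoc, div_self hpos.ne', mul_one]
end TwoCluster


lemma my_nonneg (x D : ℝ) (hD : 0 < D) (h : 0 ≤ x * D) : 0 ≤ x := by nlinarith

lemma my_one_le (x D : ℝ) (hD : 0 < D) (h : D ≤ x * D) : 1 ≤ x := by nlinarith

section TwoMain
variable {n : ℕ}

set_option maxHeartbeats 1000000 in
lemma two_cluster_main (w xbar : Fin n → ℝ) (hw : ∀ i, 0 < w i) (δ x0 a b : ℝ)
    (hδ : 0 < δ)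
    (hA : ∃ i, xbar i = a) (hB : ∃ i, xbar i = b) (hab : a < b)
    (hD1 : ∀ u v, (∃ i, xbar i = u) → (∃ i, xbar i = v) → u ≠ v →
      1 + δ / clusterWeight w xbar u + δ / clusterWeight w xbar v ≤ |u - v|)
    (hvisA : |x0 - a| < 1) (hvisB : |x0 - b| < 1)
    (hinvis : ∀ v, (∃ i, xbar i = v) → v ≠ a → v ≠ b → 1 ≤ |x0 - v|)
    (hD2a : 1 ≤ clusterWeight w xbar b * (b - a) /
        (clusterWeight w xbar a + clusterWeight w xbar b + δ) -
        δ / clusterWeight w xbar a)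
    (hD2b : (clusterWeight w xbar a * (b - a) + δ) /
        (clusterWeight w xbar a + clusterWeight w xbar b) +
        δ / clusterWeight w xbar b < 1) :
    ∃ z : Fin (n+1) → ℝ,
      wKrauseUpdate (Fin.cons δ w) (wKrauseUpdate (Fin.cons δ w)
        (Fin.cons x0 xbar : Fin (n+1) → ℝ)) = z ∧
      EqCfg z ∧ ∀ i : Fin n, |z i.succ - xbar i| ≤ 2 * δ / clusterWeight w xbar (xbar i) := by
  have habne : a ≠ b := ne_of_lt hab
  have hWa : 0 < clusterWeight w xbar a := clusterWeight_pos w xbar hw a hA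
  have hWb : 0 < clusterWeight w xbar b := clusterWeight_pos w xbar hw b hB
  have hgap : ∀ u v, (∃ i, xbar i = u) → (∃ i, xbar i = v) → u ≠ v → 1 < |u - v| := by
    intro u v hu hv huv
    have h := hD1 u v hu hv huv
    have h1 : 0 < clusterWeight w xbar u := clusterWeight_pos w xbar hw u hu
    have h2 : 0 < clusterWeight w xbar v := clusterWeight_pos w xbar hw v hv
    have := div_pos hδ h1
    have := div_pos hδ h2
    linarith
  have h1eq := two_cluster_step1 w xbar hw δ x0 a b habne hgap hvisA hvisB hA hB hinvis
  set Wa := clusterWeight w xbar a with hWadef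
  set Wb := clusterWeight w xbar b with hWbdef
  -- basic position facts
  have hg1 : 1 < b - a := by
    have := hgap a b hA hB habne
    rwa [abs_sub_comm, abs_of_pos (by linarith)] at this
  have hx0a : 0 < x0 - a ∧ x0 - a < 1 := by
    have h1 := abs_lt.1 hvisA
    have h2 := abs_lt.1 hvisB
    constructor <;> linarith
  have hx0b : 0 < b - x0 ∧ b - x0 < 1 := by
    have h1 := abs_lt.1 hvisA
    have h2 := abs_lt.1 hvisB
    constructor <;> linarith
  have hg2 : b - a < 2 := by
    have h1 := abs_lt.1 hvisA
    have h2 := abs_lt.1 hvisB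
    linarith
  have hD1ab : 1 + δ / Wa + δ / Wb ≤ b - a := by
    have := hD1 a b hA hB habne
    rwa [abs_sub_comm, abs_of_pos (by linarith)] at this
  set a1 := (δ * x0 + Wa * a) / (δ + Wa) with ha1def
  set b1 := (δ * x0 + Wb * b) / (δ + Wb) with hb1def
  set y1 := (δ * x0 + (Wa * a + Wb * b)) / (δ + (Wa + Wb)) with hy1def
  have ea1 : a1 * (δ + Wa) = δ * x0 + Wa * a := by
    rw [ha1def]; field_simp
  have eb1 : b1 * (δ + Wb) = δ * x0 + Wb * b := by
    rw [hb1def]; field_simp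
  have ey1 : y1 * (δ + (Wa + Wb)) = δ * x0 + (Wa * a + Wb * b) := by
    rw [hy1def]; field_simp
  clear_value a1 b1 y1
  clear ha1def hb1def hy1def
  have e2a : (a1 - a) * (δ + Wa) = δ * (x0 - a) := by linear_combination ea1
  have e2b : (b - b1) * (δ + Wb) = δ * (b - x0) := by linear_combination -eb1
  have e2ya : (y1 - a) * (δ + (Wa + Wb)) = δ * (x0 - a) + Wb * (b - a) := by
    linear_combination ey1
  have e2yb : (b - y1) * (δ + (Wa + Wb)) = δ * (b - x0) + Wa * (b - a) := by
    linear_combination -ey1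
  have hdWa : (0:ℝ) < δ + Wa := by linarith
  have hdWb : (0:ℝ) < δ + Wb := by linarith
  have hdW : (0:ℝ) < δ + (Wa + Wb) := by linarith
  -- displacement bounds
  have fa10 : 0 ≤ a1 - a :=
    my_nonneg _ _ hdWa (by rw [e2a]; exact mul_nonneg hδ.le hx0a.1.le)
  have fa1 : a1 - a ≤ δ / Wa := by
    rw [le_div_iff₀ hWa]
    have h1 : 0 ≤ (a1 - a) * δ := mul_nonneg fa10 hδ.le
    have h2 : 0 < δ * (1 - (x0 - a)) := mul_pos hδ (by linarith [hx0a.2])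
    linarith [e2a]
  have fb10 : 0 ≤ b - b1 :=
    my_nonneg _ _ hdWb (by rw [e2b]; exact mul_nonneg hδ.le hx0b.1.le)
  have fb1 : b - b1 ≤ δ / Wb := by
    rw [le_div_iff₀ hWb]
    have h1 : 0 ≤ (b - b1) * δ := mul_nonneg fb10 hδ.le
    have h2 : 0 < δ * (1 - (b - x0)) := mul_pos hδ (by linarith [hx0b.2])
    linarith [e2b]
  have fy1a : 1 ≤ y1 - a1 := by
    have hR : Wb * (b - a) / (Wa + Wb + δ) ≤ y1 - a := by
      rw [div_le_iff₀ (by linarith)]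
      have h1 : 0 ≤ δ * (x0 - a) := mul_nonneg hδ.le hx0a.1.le
      linarith [e2ya]
    linarith [fa1, hD2a]
  have hy1b : 0 ≤ b - y1 :=
    my_nonneg _ _ hdW (by
      rw [e2yb]
      exact add_nonneg (mul_nonneg hδ.le hx0b.1.le)
        (mul_nonneg hWa.le (by linarith)))
  have hy1b2 : b - y1 ≤ (Wa * (b - a) + δ) / (Wa + Wb) := by
    rw [le_div_iff₀ (by linarith)]
    have h1 : 0 < δ * (1 - (b - x0)) := mul_pos hδ (by linarith [hx0b.2])
    have h2 : 0 ≤ δ * (b - y1) := mul_nonneg hδ.le hy1b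
    linarith [e2yb]
  have hterm : (0:ℝ) ≤ (Wa * (b - a) + δ) / (Wa + Wb) := by positivity
  have hdWbpos : 0 < δ / Wb := div_pos hδ hWb
  have fy1b : |y1 - b1| < 1 := by
    rw [abs_lt]
    constructor
    · linarith [hy1b2, fb10, hD2b]
    · linarith [fb1, hy1b]
  have fb1a1 : 1 ≤ b1 - a1 := by linarith [hD1ab, fa1, fb1]
  -- separation from other clusters
  have hsep : ∀ v, (∃ i, xbar i = v) → v ≠ a → v ≠ b →
      (1 ≤ a1 - v ∧ 1 ≤ b1 - v ∧ 1 ≤ y1 - v) ∨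
      (1 ≤ v - a1 ∧ 1 ≤ v - b1 ∧ 1 ≤ v - y1) := by
    intro v hv hva hvb
    have hWv : 0 < clusterWeight w xbar v := clusterWeight_pos w xbar hw v hv
    have hda := hD1 a v hA hv (fun h => hva h.symm)
    have hdb := hD1 b v hB hv (fun h => hvb h.symm)
    have hpa : 0 < δ / Wa := div_pos hδ hWa
    have hpb : 0 < δ / Wb := div_pos hδ hWb
    have hpv : 0 < δ / clusterWeight w xbar v := div_pos hδ hWv
    rcases lt_trichotomy v a with hlt | heqv | hgt
    · left
      rw [abs_of_pos (by linarith)] at hda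
      rw [abs_of_pos (by linarith)] at hdb
      exact ⟨by linarith [fa10], by linarith [fb1], by linarith [fa10, fy1a]⟩
    · exact absurd heqv hva
    · have hvb' : b < v := by
        rcases lt_trichotomy v b with h1 | h2 | h3
        · exfalso
          rw [abs_of_neg (by linarith)] at hda
          rw [abs_of_pos (by linarith)] at hdb
          linarith
        · exact absurd h2 hvb
        · exact h3
      right
      rw [abs_of_neg (by linarith)] at hda
      rw [abs_of_neg (by linarith)] at hdb
      exact ⟨by linarith [fa1], by linarith [fb10], by linarith [hy1b]⟩
  have hne_ab1 : a1 ≠ b1 := by intro h; rw [h] at fb1a1; linarith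
  set u1 : Fin n → ℝ :=
    fun j => if xbar j = a then a1 else if xbar j = b then b1 else xbar j with hu1def
  have hu1 : ∀ j, (xbar j = a ∧ u1 j = a1) ∨ (xbar j = b ∧ u1 j = b1) ∨
      (xbar j ≠ a ∧ xbar j ≠ b ∧ u1 j = xbar j) := by
    intro j
    by_cases hja : xbar j = a
    · exact Or.inl ⟨hja, by show (if xbar j = a then a1 else _) = a1; rw [if_pos hja]⟩
    · by_cases hjb : xbar j = b
      · refine Or.inr (Or.inl ⟨hjb, ?_⟩)
        show (if xbar j = a then a1 else if xbar j = b then b1 else xbar j) = b1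
        rw [if_neg hja, if_pos hjb]
      · refine Or.inr (Or.inr ⟨hja, hjb, ?_⟩)
        show (if xbar j = a then a1 else if xbar j = b then b1 else xbar j) = xbar j
        rw [if_neg hja, if_neg hjb]
  have hvne : ∀ j, xbar j ≠ a → xbar j ≠ b → xbar j ≠ b1 ∧ xbar j ≠ a1 := by
    intro j hja hjb
    constructor
    · intro h
      rcases hsep (xbar j) ⟨j, rfl⟩ hja hjb with ⟨_, h2, _⟩ | ⟨_, h2, _⟩ <;>
        rw [h] at h2 <;> linarith
    · intro h
      rcases hsep (xbar j) ⟨j, rfl⟩ hja hjb with ⟨h2, _, _⟩ | ⟨h2, _, _⟩ <;>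
        rw [h] at h2 <;> linarith
  have hm1 : ∀ j, |y1 - u1 j| < 1 ↔ u1 j = b1 := by
    intro j
    rcases hu1 j with ⟨hja, hv⟩ | ⟨hjb, hv⟩ | ⟨hja, hjb, hv⟩
    · rw [hv]
      constructor
      · intro h
        rw [abs_of_nonneg (by linarith : (0:ℝ) ≤ y1 - a1)] at h
        linarith
      · intro h; exact absurd h hne_ab1
    · rw [hv]; exact iff_of_true fy1b rfl
    · rw [hv]
      constructor
      · intro h
        exfalso
        rcases hsep (xbar j) ⟨j, rfl⟩ hja hjb with ⟨_, _, h3⟩ | ⟨_, _, h3⟩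
        · rw [abs_of_nonneg (by linarith)] at h; linarith
        · rw [abs_of_nonpos (by linarith)] at h; linarith
      · intro h; exact absurd h (hvne j hja hjb).1
  have habs1 : ∀ p q : ℝ, 1 ≤ p - q → 1 ≤ |p - q| := fun p q h =>
    le_trans h (le_abs_self _)
  have habs2 : ∀ p q : ℝ, 1 ≤ p - q → 1 ≤ |q - p| := by
    intro p q h; rw [abs_sub_comm]; exact habs1 p q h
  have hm2 : ∀ i j, u1 i = u1 j ∨ 1 ≤ |u1 i - u1 j| := by
    intro i j
    rcases hu1 i with ⟨hia, hvi⟩ | ⟨hib, hvi⟩ | ⟨hia, hib, hvi⟩ <;>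
      rcases hu1 j with ⟨hja, hvj⟩ | ⟨hjb, hvj⟩ | ⟨hja, hjb, hvj⟩
    · exact Or.inl (hvi.trans hvj.symm)
    · exact Or.inr (by rw [hvi, hvj]; exact habs2 b1 a1 fb1a1)
    · rw [hvi, hvj]
      rcases hsep (xbar j) ⟨j, rfl⟩ hja hjb with ⟨h1, _, _⟩ | ⟨h1, _, _⟩
      · exact Or.inr (habs1 _ _ h1)
      · exact Or.inr (habs2 _ _ h1)
    · exact Or.inr (by rw [hvi, hvj]; exact habs1 b1 a1 fb1a1)
    · exact Or.inl (hvi.trans hvj.symm)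
    · rw [hvi, hvj]
      rcases hsep (xbar j) ⟨j, rfl⟩ hja hjb with ⟨_, h1, _⟩ | ⟨_, h1, _⟩
      · exact Or.inr (habs1 _ _ h1)
      · exact Or.inr (habs2 _ _ h1)
    · rw [hvi, hvj]
      rcases hsep (xbar i) ⟨i, rfl⟩ hia hib with ⟨h1, _, _⟩ | ⟨h1, _, _⟩
      · exact Or.inr (habs2 _ _ h1)
      · exact Or.inr (habs1 _ _ h1)
    · rw [hvi, hvj]
      rcases hsep (xbar i) ⟨i, rfl⟩ hia hib with ⟨_, h1, _⟩ | ⟨_, h1, _⟩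
      · exact Or.inr (habs2 _ _ h1)
      · exact Or.inr (habs1 _ _ h1)
    · rw [hvi, hvj]
      by_cases h : xbar i = xbar j
      · exact Or.inl h
      · refine Or.inr ?_
        have := hD1 (xbar i) (xbar j) ⟨i, rfl⟩ ⟨j, rfl⟩ h
        have p1 := div_pos hδ (clusterWeight_pos w xbar hw _ ⟨i, rfl⟩)
        have p2 := div_pos hδ (clusterWeight_pos w xbar hw _ ⟨j, rfl⟩)
        linarith
  have h2eq := merge_step w u1 hw δ y1 b1 hδ hm1 hm2
  have hCW1 : clusterWeight w u1 b1 = Wb := by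
    rw [hWbdef]
    unfold clusterWeight
    congr 1
    apply Finset.filter_congr
    intro j _
    rcases hu1 j with ⟨hja, hv⟩ | ⟨hjb, hv⟩ | ⟨hja, hjb, hv⟩
    · simp only [hv]
      exact iff_of_false hne_ab1 (by rw [hja]; exact habne)
    · simp only [hv]
      simp [hjb]
    · simp only [hv]
      exact iff_of_false (hvne j hja hjb).1 hjb
  rw [hCW1] at h2eq
  set M := (δ * y1 + Wb * b1) / (δ + Wb) with hMdef
  have eM : M * (δ + Wb) = δ * y1 + Wb * b1 := by rw [hMdef]; field_simp
  clear_value M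
  have gMa1 : 1 ≤ M - a1 := by
    have e5 : (M - a1) * (δ + Wb) = δ * (y1 - a1) + Wb * (b1 - a1) := by
      linear_combination eM
    have h1 : 0 ≤ δ * (y1 - a1 - 1) := mul_nonneg hδ.le (by linarith)
    have h2 : 0 ≤ Wb * (b1 - a1 - 1) := mul_nonneg hWb.le (by linarith)
    exact my_one_le _ _ hdWb (by linarith [e5])
  have eMb1 : (M - b1) * (δ + Wb) = δ * (y1 - b1) := by linear_combination eM
  have gMb1 : |M - b1| ≤ δ / Wb := by
    have hq : M - b1 = δ * (y1 - b1) / (δ + Wb) := by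
      rw [eq_div_iff hdWb.ne']; exact eMb1
    rw [hq, abs_div, abs_of_pos hdWb, abs_mul, abs_of_pos hδ,
      div_le_div_iff₀ hdWb hWb]
    have h2 : 0 ≤ δ * Wb * (1 - |y1 - b1|) :=
      mul_nonneg (mul_pos hδ hWb).le (by linarith [fy1b])
    linarith [h2, mul_pos hδ hδ]
  have gMb : |M - b| ≤ 2 * (δ / Wb) := by
    have htri : |M - b| ≤ |M - b1| + |b1 - b| := abs_sub_le M b1 b
    have hb1b : |b1 - b| ≤ δ / Wb := by
      rw [abs_sub_comm, abs_of_nonneg fb10]; exact fb1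
    linarith [gMb1]
  have gMv : ∀ v, (∃ i, xbar i = v) → v ≠ a → v ≠ b → (1 ≤ M - v ∨ 1 ≤ v - M) := by
    intro v hv hva hvb
    rcases hsep v hv hva hvb with ⟨h1, h2, h3⟩ | ⟨h1, h2, h3⟩
    · left
      have e5 : (M - v) * (δ + Wb) = δ * (y1 - v) + Wb * (b1 - v) := by
        linear_combination eM
      have q1 : 0 ≤ δ * (y1 - v - 1) := mul_nonneg hδ.le (by linarith)
      have q2 : 0 ≤ Wb * (b1 - v - 1) := mul_nonneg hWb.le (by linarith)
      exact my_one_le _ _ hdWb (by linarith [e5])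
    · right
      have e5 : (v - M) * (δ + Wb) = δ * (v - y1) + Wb * (v - b1) := by
        linear_combination -eM
      have q1 : 0 ≤ δ * (v - y1 - 1) := mul_nonneg hδ.le (by linarith)
      have q2 : 0 ≤ Wb * (v - b1 - 1) := mul_nonneg hWb.le (by linarith)
      exact my_one_le _ _ hdWb (by linarith [e5])
  refine ⟨Fin.cons M (fun j => if u1 j = b1 then M else u1 j), ?_, ?_, ?_⟩
  · rw [h1eq, h2eq]
  · -- EqCfg
    set Z : Fin (n+1) → ℝ := Fin.cons M (fun j => if u1 j = b1 then M else u1 j)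
      with hZ
    have hZval : ∀ k : Fin (n+1), Z k = M ∨ Z k = a1 ∨
        (∃ i', xbar i' = Z k ∧ Z k ≠ a ∧ Z k ≠ b) := by
      intro k
      refine Fin.cases ?_ ?_ k
      · left; rw [hZ, Fin.cons_zero]
      · intro i
        rcases hu1 i with ⟨hia, hvi⟩ | ⟨hib, hvi⟩ | ⟨hia, hib, hvi⟩
        · right; left
          rw [hZ, Fin.cons_succ, hvi, if_neg hne_ab1]
        · left
          rw [hZ, Fin.cons_succ, hvi, if_pos rfl]
        · right; right
          have hz : Z i.succ = xbar i := by
            rw [hZ, Fin.cons_succ, hvi, if_neg (hvne i hia hib).1]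
          exact ⟨i, by rw [hz], by rw [hz]; exact hia, by rw [hz]; exact hib⟩
    intro k l
    rcases hZval k with hk | hk | ⟨ik, hik, hka, hkb⟩ <;>
      rcases hZval l with hl | hl | ⟨il, hil, hla, hlb⟩
    · exact Or.inl (hk.trans hl.symm)
    · rw [hk, hl]; exact Or.inr (habs1 _ _ gMa1)
    · rw [hk]
      rcases gMv (Z l) ⟨il, hil⟩ hla hlb with h | h
      · exact Or.inr (habs1 _ _ h)
      · exact Or.inr (habs2 _ _ h)
    · rw [hk, hl]; exact Or.inr (habs2 _ _ gMa1)
    · exact Or.inl (hk.trans hl.symm)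
    · rw [hk]
      rcases hsep (Z l) ⟨il, hil⟩ hla hlb with ⟨h1, _, _⟩ | ⟨h1, _, _⟩
      · exact Or.inr (habs1 _ _ h1)
      · exact Or.inr (habs2 _ _ h1)
    · rw [hl]
      rcases gMv (Z k) ⟨ik, hik⟩ hka hkb with h | h
      · exact Or.inr (habs2 _ _ h)
      · exact Or.inr (habs1 _ _ h)
    · rw [hl]
      rcases hsep (Z k) ⟨ik, hik⟩ hka hkb with ⟨h1, _, _⟩ | ⟨h1, _, _⟩
      · exact Or.inr (habs2 _ _ h1)
      · exact Or.inr (habs1 _ _ h1)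
    · by_cases h : Z k = Z l
      · exact Or.inl h
      · refine Or.inr ?_
        have := hD1 (Z k) (Z l) ⟨ik, hik⟩ ⟨il, hil⟩ h
        have p1 := div_pos hδ (clusterWeight_pos w xbar hw _ ⟨ik, hik⟩)
        have p2 := div_pos hδ (clusterWeight_pos w xbar hw _ ⟨il, hil⟩)
        linarith
  · -- bounds
    intro i
    rw [Fin.cons_succ]
    rcases hu1 i with ⟨hia, hvi⟩ | ⟨hib, hvi⟩ | ⟨hia, hib, hvi⟩
    · rw [hvi, if_neg hne_ab1, hia, ← hWadef,
        abs_of_nonneg (by linarith : (0:ℝ) ≤ a1 - a),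
        show (2:ℝ) * δ / Wa = 2 * (δ / Wa) by ring]
      linarith [fa1, div_pos hδ hWa]
    · rw [hvi, if_pos rfl, hib, ← hWbdef,
        show (2:ℝ) * δ / Wb = 2 * (δ / Wb) by ring]
      exact gMb
    · rw [hvi, if_neg (hvne i hia hib).1, sub_self, abs_zero]
      have := clusterWeight_pos w xbar hw (xbar i) ⟨i, rfl⟩
      positivity

end TwoMain

section OneMain
variable {n : ℕ}

set_option maxHeartbeats 1000000 in
lemma one_cluster_main (w xbar : Fin n → ℝ) (hw : ∀ i, 0 < w i) (δ x0 a : ℝ)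
    (hδ : 0 < δ) (hA : ∃ i, xbar i = a)
    (hD1 : ∀ u v, (∃ i, xbar i = u) → (∃ i, xbar i = v) → u ≠ v →
      1 + δ / clusterWeight w xbar u + δ / clusterWeight w xbar v ≤ |u - v|)
    (hvisA : |x0 - a| < 1)
    (hinvis : ∀ v, (∃ i, xbar i = v) → v ≠ a → 1 ≤ |x0 - v|) :
    ∃ z : Fin (n+1) → ℝ,
      wKrauseUpdate (Fin.cons δ w) (Fin.cons x0 xbar : Fin (n+1) → ℝ) = z ∧
      EqCfg z ∧ ∀ i : Fin n, |z i.succ - xbar i| ≤ 2 * δ / clusterWeight w xbar (xbar i) := by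
  have hWa : 0 < clusterWeight w xbar a := clusterWeight_pos w xbar hw a hA
  set Wa := clusterWeight w xbar a with hWadef
  have hgap : ∀ u v, (∃ i, xbar i = u) → (∃ i, xbar i = v) → u ≠ v → 1 < |u - v| := by
    intro u v hu hv huv
    have h := hD1 u v hu hv huv
    have h1 := div_pos hδ (clusterWeight_pos w xbar hw u hu)
    have h2 := div_pos hδ (clusterWeight_pos w xbar hw v hv)
    linarith
  have h1 : ∀ j, |x0 - xbar j| < 1 ↔ xbar j = a := by
    intro j
    constructor
    · intro h
      by_contra hja
      exact absurd (hinvis (xbar j) ⟨j, rfl⟩ hja) (by linarith)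
    · intro h; rw [h]; exact hvisA
  have h2 : ∀ i j, xbar i = xbar j ∨ 1 ≤ |xbar i - xbar j| := by
    intro i j
    by_cases h : xbar i = xbar j
    · exact Or.inl h
    · exact Or.inr (le_of_lt (hgap _ _ ⟨i, rfl⟩ ⟨j, rfl⟩ h))
  have heq := merge_step w xbar hw δ x0 a hδ h1 h2
  set M := (δ * x0 + Wa * a) / (δ + Wa) with hMdef
  have hdWa : (0:ℝ) < δ + Wa := by linarith
  have eM : M * (δ + Wa) = δ * x0 + Wa * a := by rw [hMdef]; field_simp
  clear_value M
  have eMa : (M - a) * (δ + Wa) = δ * (x0 - a) := by linear_combination eM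
  have dMa : |M - a| ≤ δ / Wa := by
    have hq : M - a = δ * (x0 - a) / (δ + Wa) := by
      rw [eq_div_iff hdWa.ne']; exact eMa
    rw [hq, abs_div, abs_of_pos hdWa, abs_mul, abs_of_pos hδ,
      div_le_div_iff₀ hdWa hWa]
    have h2' : 0 ≤ δ * Wa * (1 - |x0 - a|) :=
      mul_nonneg (mul_pos hδ hWa).le (by linarith [hvisA])
    linarith [h2', mul_pos hδ hδ]
  have hMv : ∀ v, (∃ i, xbar i = v) → v ≠ a → 1 ≤ |M - v| := by
    intro v hv hva
    have hd := hD1 a v hA hv (fun h => hva h.symm)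
    have hpv := div_pos hδ (clusterWeight_pos w xbar hw v hv)
    have htri : |a - v| ≤ |a - M| + |M - v| := abs_sub_le a M v
    have hMa' : |a - M| ≤ δ / Wa := by rw [abs_sub_comm]; exact dMa
    linarith
  refine ⟨_, heq, ?_, ?_⟩
  · -- EqCfg
    set Z : Fin (n+1) → ℝ := Fin.cons M (fun j => if xbar j = a then M else xbar j)
      with hZ
    have hZval : ∀ k : Fin (n+1), Z k = M ∨
        (∃ i', xbar i' = Z k ∧ Z k ≠ a) := by
      intro k
      refine Fin.cases ?_ ?_ k
      · left; rw [hZ, Fin.cons_zero]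
      · intro i
        by_cases hia : xbar i = a
        · left; rw [hZ, Fin.cons_succ, if_pos hia]
        · right
          have hz : Z i.succ = xbar i := by rw [hZ, Fin.cons_succ, if_neg hia]
          exact ⟨i, by rw [hz], by rw [hz]; exact hia⟩
    intro k l
    rcases hZval k with hk | ⟨ik, hik, hka⟩ <;> rcases hZval l with hl | ⟨il, hil, hla⟩
    · exact Or.inl (hk.trans hl.symm)
    · rw [hk]; exact Or.inr (hMv (Z l) ⟨il, hil⟩ hla)
    · rw [hl]
      refine Or.inr ?_
      rw [abs_sub_comm]
      exact hMv (Z k) ⟨ik, hik⟩ hka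
    · by_cases h : Z k = Z l
      · exact Or.inl h
      · refine Or.inr ?_
        exact le_of_lt (hgap _ _ ⟨ik, hik⟩ ⟨il, hil⟩ h)
  · -- bounds
    intro i
    rw [Fin.cons_succ]
    by_cases hia : xbar i = a
    · rw [if_pos hia, hia, ← hWadef, show (2:ℝ) * δ / Wa = 2 * (δ / Wa) by ring]
      exact le_trans dMa (by linarith [div_pos hδ hWa])
    · rw [if_neg hia, sub_self, abs_zero]
      have := clusterWeight_pos w xbar hw (xbar i) ⟨i, rfl⟩
      positivity

end OneMain

section Core
variable {n : ℕ}

set_option maxHeartbeats 1000000 in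
lemma core_two_steps (w xbar : Fin n → ℝ) (hw : ∀ i, 0 < w i) (δ x0 : ℝ) (hδ : 0 < δ)
    (hG1 : ∀ u v, (∃ i, xbar i = u) → (∃ i, xbar i = v) → u ≠ v →
      1 + δ / clusterWeight w xbar u + δ / clusterWeight w xbar v ≤ |u - v|)
    (hG3 : ∀ a b, (∃ i, xbar i = a) → (∃ i, xbar i = b) → a ≠ b → |a - b| < 2 →
      clusterWeight w xbar a < clusterWeight w xbar b →
      (1 ≤ clusterWeight w xbar b * |a - b| /
          (clusterWeight w xbar a + clusterWeight w xbar b + δ) -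
          δ / clusterWeight w xbar a ∧
       (clusterWeight w xbar a * |a - b| + δ) /
          (clusterWeight w xbar a + clusterWeight w xbar b) +
          δ / clusterWeight w xbar b < 1))
    (hne2 : ∀ a b, (∃ i, xbar i = a) → (∃ i, xbar i = b) → a ≠ b → |a - b| < 2 →
      clusterWeight w xbar a ≠ clusterWeight w xbar b) :
    ∃ z : Fin (n+1) → ℝ,
      wKrauseUpdate (Fin.cons δ w) (wKrauseUpdate (Fin.cons δ w)
        (Fin.cons x0 xbar : Fin (n+1) → ℝ)) = z ∧
      EqCfg z ∧ ∀ i : Fin n, |z i.succ - xbar i| ≤ 2 * δ / clusterWeight w xbar (xbar i) := by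
  have hW' : ∀ k : Fin (n+1), 0 < (Fin.cons δ w : Fin (n+1) → ℝ) k := by
    intro k; refine Fin.cases ?_ ?_ k
    · rw [Fin.cons_zero]; exact hδ
    · intro i; rw [Fin.cons_succ]; exact hw i
  have hgap : ∀ u v, (∃ i, xbar i = u) → (∃ i, xbar i = v) → u ≠ v → 1 < |u - v| := by
    intro u v hu hv huv
    have h := hG1 u v hu hv huv
    have h1 := div_pos hδ (clusterWeight_pos w xbar hw u hu)
    have h2 := div_pos hδ (clusterWeight_pos w xbar hw v hv)
    linarith
  by_cases hvis : ∃ a, (∃ i, xbar i = a) ∧ |x0 - a| < 1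
  rotate_left
  · -- no visible cluster: already an equilibrium config
    push_neg at hvis
    have hcfg : EqCfg (Fin.cons x0 xbar : Fin (n+1) → ℝ) := by
      intro k l
      refine Fin.cases ?_ ?_ k <;> [skip; intro i] <;> refine Fin.cases ?_ ?_ l <;>
        try intro j
      · exact Or.inl rfl
      · refine Or.inr ?_
        rw [Fin.cons_zero, Fin.cons_succ]
        exact hvis (xbar j) ⟨j, rfl⟩
      · refine Or.inr ?_
        rw [Fin.cons_zero, Fin.cons_succ, abs_sub_comm]
        exact hvis (xbar i) ⟨i, rfl⟩
      · rw [Fin.cons_succ, Fin.cons_succ]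
        by_cases h : xbar i = xbar j
        · exact Or.inl h
        · exact Or.inr (le_of_lt (hgap _ _ ⟨i, rfl⟩ ⟨j, rfl⟩ h))
    refine ⟨Fin.cons x0 xbar, ?_, hcfg, ?_⟩
    · rw [update_eq_of_eqCfg _ _ hW' hcfg, update_eq_of_eqCfg _ _ hW' hcfg]
    · intro i
      rw [Fin.cons_succ, sub_self, abs_zero]
      have := clusterWeight_pos w xbar hw (xbar i) ⟨i, rfl⟩
      positivity
  obtain ⟨a, hA, hvisA⟩ := hvis
  by_cases hvis2 : ∃ b, (∃ i, xbar i = b) ∧ |x0 - b| < 1 ∧ b ≠ a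
  rotate_left
  · -- exactly one visible cluster
    push_neg at hvis2
    have hinvis : ∀ v, (∃ i, xbar i = v) → v ≠ a → 1 ≤ |x0 - v| := by
      intro v hv hva
      by_contra h
      exact hva (hvis2 v hv (by linarith [abs_nonneg (x0 - v)]))
    obtain ⟨z, hz, hcfg, hbnd⟩ := one_cluster_main w xbar hw δ x0 a hδ hA hG1 hvisA hinvis
    refine ⟨z, ?_, hcfg, hbnd⟩
    rw [hz, update_eq_of_eqCfg _ _ hW' hcfg]
  · -- two visible clusters
    obtain ⟨b, hB, hvisB, hba⟩ := hvis2
    have hinvis : ∀ v, (∃ i, xbar i = v) → v ≠ a → v ≠ b → 1 ≤ |x0 - v| := by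
      intro v hv hva hvb
      by_contra h
      push_neg at h
      have g1 := hgap a b hA hB (Ne.symm hba)
      have g2 := hgap a v hA hv (fun he => hva he.symm)
      have g3 := hgap b v hB hv (fun he => hvb he.symm)
      have d1 := abs_lt.1 hvisA
      have d2 := abs_lt.1 hvisB
      have d3 := abs_lt.1 h
      rcases lt_abs.1 g1 with h1 | h1 <;> rcases lt_abs.1 g2 with h2 | h2 <;>
        rcases lt_abs.1 g3 with h3 | h3 <;> linarith
    -- order the two values
    obtain ⟨p, q, hP, hQ, hpq, hvisP, hvisQ, hinv⟩ :
        ∃ p q, (∃ i, xbar i = p) ∧ (∃ i, xbar i = q) ∧ p < q ∧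
          |x0 - p| < 1 ∧ |x0 - q| < 1 ∧
          ∀ v, (∃ i, xbar i = v) → v ≠ p → v ≠ q → 1 ≤ |x0 - v| := by
      rcases lt_trichotomy a b with h | h | h
      · exact ⟨a, b, hA, hB, h, hvisA, hvisB, hinvis⟩
      · exact absurd h.symm hba
      · exact ⟨b, a, hB, hA, h, hvisB, hvisA, fun v hv h1 h2 => hinvis v hv h2 h1⟩
    have hpqne : p ≠ q := ne_of_lt hpq
    have habspq : |p - q| = q - p := by
      rw [abs_sub_comm, abs_of_pos (by linarith)]
    have hlt2 : |p - q| < 2 := by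
      have d1 := abs_lt.1 hvisP
      have d2 := abs_lt.1 hvisQ
      rw [habspq]; linarith
    have hCWne : clusterWeight w xbar p ≠ clusterWeight w xbar q :=
      hne2 p q hP hQ hpqne hlt2
    rcases hCWne.lt_or_gt with hlt | hgt
    · -- heavier cluster on the right: direct
      obtain ⟨h2a, h2b⟩ := hG3 p q hP hQ hpqne hlt2 hlt
      rw [habspq] at h2a h2b
      exact two_cluster_main w xbar hw δ x0 p q hδ hP hQ hpq hG1 hvisP hvisQ hinv h2a h2b
    · -- heavier cluster on the left: reflect
      have habsqp : |q - p| = q - p := abs_of_pos (by linarith)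
      obtain ⟨h2a, h2b⟩ := hG3 q p hQ hP (Ne.symm hpqne) (by rwa [abs_sub_comm]) hgt
      rw [habsqp] at h2a h2b
      -- reflected data
      set xb' : Fin n → ℝ := fun i => -(xbar i) with hxb'
      have hcw' : ∀ c : ℝ, clusterWeight w xb' (-c) = clusterWeight w xbar c := by
        intro c; rw [hxb']; exact clusterWeight_neg w xbar c
      have hatt' : ∀ v : ℝ, (∃ i, xb' i = v) ↔ (∃ i, xbar i = -v) := by
        intro v
        constructor
        · rintro ⟨i, hi⟩; exact ⟨i, by rw [← hi, hxb']; ring⟩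
        · rintro ⟨i, hi⟩; exact ⟨i, by rw [hxb']; simp [hi]⟩
      have hcw'' : ∀ v : ℝ, clusterWeight w xb' v = clusterWeight w xbar (-v) := by
        intro v
        have := hcw' (-v)
        rwa [neg_neg] at this
      have hG1' : ∀ u v, (∃ i, xb' i = u) → (∃ i, xb' i = v) → u ≠ v →
          1 + δ / clusterWeight w xb' u + δ / clusterWeight w xb' v ≤ |u - v| := by
        intro u v hu hv huv
        rw [hcw'' u, hcw'' v]
        have h := hG1 (-u) (-v) ((hatt' u).1 hu) ((hatt' v).1 hv)
          (fun he => huv (by linarith [neg_injective he]))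
        rwa [show -u - -v = -(u - v) by ring, abs_neg] at h
      obtain ⟨z', hz', hcfg', hbnd'⟩ := two_cluster_main w xb' hw δ (-x0) (-q) (-p) hδ
        ((hatt' (-q)).2 (by rwa [neg_neg])) ((hatt' (-p)).2 (by rwa [neg_neg]))
        (by linarith) hG1'
        (by rw [show -x0 - -q = -(x0 - q) by ring, abs_neg]; exact hvisQ)
        (by rw [show -x0 - -p = -(x0 - p) by ring, abs_neg]; exact hvisP)
        (by
          intro v hv hvq hvp
          have h := hinv (-v) ((hatt' v).1 hv)
            (fun he => hvp (by rw [← he]; ring)) (fun he => hvq (by rw [← he]; ring))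
          rw [show (-x0 - v : ℝ) = -(x0 - -v) by ring, abs_neg]
          exact h)
        (by
          rw [hcw'' (-q), hcw'' (-p), neg_neg, neg_neg,
            show -p - -q = q - p by ring]
          exact h2a)
        (by
          rw [hcw'' (-q), hcw'' (-p), neg_neg, neg_neg,
            show -p - -q = q - p by ring]
          exact h2b)
      -- transfer back
      have hconsneg : (Fin.cons (-x0) xb' : Fin (n+1) → ℝ) =
          fun k => -((Fin.cons x0 xbar : Fin (n+1) → ℝ) k) := by
        funext k
        refine Fin.cases ?_ ?_ k
        · rw [Fin.cons_zero, Fin.cons_zero]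
        · intro i; rw [Fin.cons_succ, Fin.cons_succ, hxb']
      rw [hconsneg, update_neg, update_neg] at hz'
      refine ⟨fun k => -(z' k), ?_, ?_, ?_⟩
      · funext k
        have := congrFun hz' k
        beta_reduce at this ⊢
        linarith [this]
      · have := eqCfg_neg z' hcfg'
        exact this
      · intro i
        have h := hbnd' i
        rw [hcw'' (xb' i), hxb'] at h
        simp only [neg_neg] at h
        rw [show -(z' i.succ) - xbar i = -(z' i.succ - -(xbar i)) by ring, abs_neg]
        exact h

end Core

section Assemble
variable {n : ℕ}

lemma delta_bound (w xbar : Fin n → ℝ) (hw : ∀ i, 0 < w i) (δ x0 : ℝ) (hδ : 0 < δ)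
    (hG1 : ∀ u v, (∃ i, xbar i = u) → (∃ i, xbar i = v) → u ≠ v →
      1 + δ / clusterWeight w xbar u + δ / clusterWeight w xbar v ≤ |u - v|)
    (hG3 : ∀ a b, (∃ i, xbar i = a) → (∃ i, xbar i = b) → a ≠ b → |a - b| < 2 →
      clusterWeight w xbar a < clusterWeight w xbar b →
      (1 ≤ clusterWeight w xbar b * |a - b| /
          (clusterWeight w xbar a + clusterWeight w xbar b + δ) -
          δ / clusterWeight w xbar a ∧
       (clusterWeight w xbar a * |a - b| + δ) /
          (clusterWeight w xbar a + clusterWeight w xbar b) +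
          δ / clusterWeight w xbar b < 1))
    (hne2 : ∀ a b, (∃ i, xbar i = a) → (∃ i, xbar i = b) → a ≠ b → |a - b| < 2 →
      clusterWeight w xbar a ≠ clusterWeight w xbar b) :
    ∑ i, w i * |xbar i - perturbedLimit w xbar x0 δ i| ≤
      (∑ i, w i * (2 / clusterWeight w xbar (xbar i))) * δ := by
  obtain ⟨z, hz, hcfg, hbnd⟩ := core_two_steps w xbar hw δ x0 hδ hG1 hG3 hne2
  have hW' : ∀ k : Fin (n+1), 0 < (Fin.cons δ w : Fin (n+1) → ℝ) k := by
    intro k; refine Fin.cases ?_ ?_ k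
    · rw [Fin.cons_zero]; exact hδ
    · intro i; rw [Fin.cons_succ]; exact hw i
  have htraj2 : wKrauseTraj (Fin.cons δ w) (Fin.cons x0 xbar) 2 = z := by
    show (wKrauseUpdate (Fin.cons δ w))^[2] (Fin.cons x0 xbar) = z
    rw [Function.iterate_succ_apply', Function.iterate_one]
    exact hz
  have hconst := traj_const_of_eqCfg (Fin.cons δ w) hW' (Fin.cons x0 xbar) 2
    (by rw [htraj2]; exact hcfg)
  have hlim : ∀ i : Fin n, perturbedLimit w xbar x0 δ i = z i.succ := by
    intro i
    unfold perturbedLimit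
    apply Filter.Tendsto.limUnder_eq
    apply tendsto_atTop_of_eventually_const (i₀ := 2)
    intro t ht
    rw [hconst t ht, htraj2]
  calc ∑ i, w i * |xbar i - perturbedLimit w xbar x0 δ i|
      = ∑ i, w i * |xbar i - z i.succ| := by
        refine Finset.sum_congr rfl fun i _ => ?_
        rw [hlim i]
    _ ≤ ∑ i, w i * (2 * δ / clusterWeight w xbar (xbar i)) := by
        refine Finset.sum_le_sum fun i _ => ?_
        refine mul_le_mul_of_nonneg_left ?_ (hw i).le
        rw [abs_sub_comm]
        exact hbnd i
    _ = (∑ i, w i * (2 / clusterWeight w xbar (xbar i))) * δ := by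
        rw [Finset.sum_mul]
        refine Finset.sum_congr rfl fun i _ => ?_
        ring

end Assemble

/-- If every pair of distinct clusters of an equilibrium of the
weighted Krause model satisfies the inter-cluster distance condition, then the
equilibrium is stable with respect to the addition of a perturbing agent. -/
theorem krause_stability_sufficient {n : ℕ} (w : Fin n → ℝ) (hw : ∀ i, 0 < w i)
    (xbar : Fin n → ℝ)
    (heq : ∀ i j : Fin n, xbar i = xbar j ∨ 1 ≤ |xbar i - xbar j|)
    (hclus : ∀ a b : ℝ, (∃ i, xbar i = a) → (∃ j, xbar j = b) → a ≠ b →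
      (clusterWeight w xbar a = clusterWeight w xbar b ∧ 2 ≤ |a - b|) ∨
      (clusterWeight w xbar a ≠ clusterWeight w xbar b ∧
        1 + min (clusterWeight w xbar a) (clusterWeight w xbar b) /
            max (clusterWeight w xbar a) (clusterWeight w xbar b) < |a - b|)) :
    IsStableEquilibrium w xbar := by
  unfold IsStableEquilibrium perturbDelta
  classical
  have hWpos : ∀ v, (∃ i, xbar i = v) → 0 < clusterWeight w xbar v :=
    clusterWeight_pos w xbar hw
  have hgap0 : ∀ u v, (∃ i, xbar i = u) → (∃ i, xbar i = v) → u ≠ v → 1 < |u - v| := by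
    intro u v hu hv huv
    rcases hclus u v hu hv huv with ⟨_, h2⟩ | ⟨_, h2⟩
    · linarith
    · have hpos : 0 < min (clusterWeight w xbar u) (clusterWeight w xbar v) /
          max (clusterWeight w xbar u) (clusterWeight w xbar v) :=
        div_pos (lt_min (hWpos u hu) (hWpos v hv))
          (lt_of_lt_of_le (hWpos u hu) (le_max_left _ _))
      linarith
  have hne2 : ∀ a b, (∃ i, xbar i = a) → (∃ i, xbar i = b) → a ≠ b → |a - b| < 2 →
      clusterWeight w xbar a ≠ clusterWeight w xbar b := by
    intro a b ha hb hab hd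
    rcases hclus a b ha hb hab with ⟨_, h2⟩ | ⟨h1, _⟩
    · linarith
    · exact h1
  have hid : Filter.Tendsto (fun δ : ℝ => δ) (nhdsWithin 0 (Set.Ioi 0)) (nhds 0) :=
    tendsto_id.mono_left nhdsWithin_le_nhds
  have hE1 : ∀ᶠ δ in nhdsWithin (0:ℝ) (Set.Ioi 0), ∀ i j : Fin n, xbar i ≠ xbar j →
      1 + δ / clusterWeight w xbar (xbar i) + δ / clusterWeight w xbar (xbar j) ≤
        |xbar i - xbar j| := by
    rw [eventually_all]
    intro i
    rw [eventually_all]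
    intro j
    by_cases hij : xbar i = xbar j
    · exact Filter.Eventually.of_forall (fun δ h => absurd hij h)
    · have hg := hgap0 _ _ ⟨i, rfl⟩ ⟨j, rfl⟩ hij
      have ht : Filter.Tendsto
          (fun δ : ℝ => 1 + δ / clusterWeight w xbar (xbar i) +
            δ / clusterWeight w xbar (xbar j))
          (nhdsWithin 0 (Set.Ioi 0))
          (nhds (1 + (0:ℝ) / clusterWeight w xbar (xbar i) +
            (0:ℝ) / clusterWeight w xbar (xbar j))) :=
        (tendsto_const_nhds.add (hid.div_const _)).add (hid.div_const _)
      rw [zero_div, zero_div, add_zero, add_zero] at ht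
      filter_upwards [ht.eventually_lt_const hg] with δ h _
      exact h.le
  have hE3 : ∀ᶠ δ in nhdsWithin (0:ℝ) (Set.Ioi 0), ∀ i j : Fin n,
      (xbar i ≠ xbar j ∧ |xbar i - xbar j| < 2 ∧
        clusterWeight w xbar (xbar i) < clusterWeight w xbar (xbar j)) →
      (1 ≤ clusterWeight w xbar (xbar j) * |xbar i - xbar j| /
          (clusterWeight w xbar (xbar i) + clusterWeight w xbar (xbar j) + δ) -
          δ / clusterWeight w xbar (xbar i) ∧
       (clusterWeight w xbar (xbar i) * |xbar i - xbar j| + δ) /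
          (clusterWeight w xbar (xbar i) + clusterWeight w xbar (xbar j)) +
          δ / clusterWeight w xbar (xbar j) < 1) := by
    rw [eventually_all]
    intro i
    rw [eventually_all]
    intro j
    by_cases hP : xbar i ≠ xbar j ∧ |xbar i - xbar j| < 2 ∧
        clusterWeight w xbar (xbar i) < clusterWeight w xbar (xbar j)
    · obtain ⟨hij, hd2, hWlt⟩ := hP
      set Wi := clusterWeight w xbar (xbar i) with hWi'
      set Wj := clusterWeight w xbar (xbar j) with hWj'
      set d := |xbar i - xbar j| with hd'
      have hWi := hWpos _ ⟨i, rfl⟩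
      have hWj := hWpos _ ⟨j, rfl⟩
      rw [← hWi'] at hWi
      rw [← hWj'] at hWj
      have hbr : 1 + Wi / Wj < d := by
        rcases hclus (xbar i) (xbar j) ⟨i, rfl⟩ ⟨j, rfl⟩ hij with ⟨hEq, _⟩ | ⟨_, h2⟩
        · exact absurd hEq (ne_of_lt hWlt)
        · rwa [min_eq_left hWlt.le, max_eq_right hWlt.le] at h2
      have hfld : Wj * (1 + Wi / Wj) = Wj + Wi := by field_simp
      have hL1 : 1 < Wj * d / (Wi + Wj) := by
        rw [lt_div_iff₀ (by linarith)]
        have := mul_lt_mul_of_pos_left hbr hWj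
        linarith
      have hL2 : Wi * d / (Wi + Wj) < 1 := by
        rw [div_lt_one (by linarith)]
        have := mul_lt_mul_of_pos_left hd2 hWi
        linarith
      have ht1 : Filter.Tendsto (fun δ : ℝ => Wj * d / (Wi + Wj + δ) - δ / Wi)
          (nhdsWithin 0 (Set.Ioi 0)) (nhds (Wj * d / (Wi + Wj))) := by
        have h1 : Filter.Tendsto (fun δ : ℝ => Wi + Wj + δ)
            (nhdsWithin 0 (Set.Ioi 0)) (nhds (Wi + Wj + 0)) :=
          tendsto_const_nhds.add hid
        have h2 := (Filter.Tendsto.div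
          (tendsto_const_nhds : Filter.Tendsto (fun _ : ℝ => Wj * d) _ (nhds (Wj * d)))
          h1 (by intro h; rw [add_zero] at h; linarith)).sub (hid.div_const Wi)
        have h3 : Wj * d / (Wi + Wj + 0) - 0 / Wi = Wj * d / (Wi + Wj) := by
          rw [add_zero, zero_div, sub_zero]
        rwa [h3] at h2
      have ht2 : Filter.Tendsto (fun δ : ℝ => (Wi * d + δ) / (Wi + Wj) + δ / Wj)
          (nhdsWithin 0 (Set.Ioi 0)) (nhds (Wi * d / (Wi + Wj))) := by
        have h2 : Filter.Tendsto (fun δ : ℝ => (Wi * d + δ) / (Wi + Wj) + δ / Wj)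
            (nhdsWithin 0 (Set.Ioi 0)) (nhds ((Wi * d + 0) / (Wi + Wj) + 0 / Wj)) :=
          ((tendsto_const_nhds.add hid).div_const (Wi + Wj)).add (hid.div_const Wj)
        have h3 : (Wi * d + 0) / (Wi + Wj) + 0 / Wj = Wi * d / (Wi + Wj) := by
          rw [add_zero, zero_div, add_zero]
        rwa [h3] at h2
      filter_upwards [ht1.eventually_const_lt hL1, ht2.eventually_lt_const hL2]
        with δ h1 h2 _
      exact ⟨h1.le, h2⟩
    · exact Filter.Eventually.of_forall (fun δ h => absurd h hP)
  have hEpos : ∀ᶠ δ in nhdsWithin (0:ℝ) (Set.Ioi 0), 0 < δ :=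
    eventually_mem_nhdsWithin.mono (fun δ h => Set.mem_Ioi.1 h)
  apply squeeze_zero' (g := fun δ : ℝ => (∑ i, w i * (2 / clusterWeight w xbar (xbar i))) * δ)
  · exact Filter.Eventually.of_forall (fun δ => Real.iSup_nonneg (fun x0 =>
      Finset.sum_nonneg fun i _ => mul_nonneg (hw i).le (abs_nonneg _)))
  · filter_upwards [hE1, hE3, hEpos] with δ h1 h3 hpos
    refine ciSup_le fun x0 => ?_
    have hG1 : ∀ u v, (∃ i, xbar i = u) → (∃ i, xbar i = v) → u ≠ v →
        1 + δ / clusterWeight w xbar u + δ / clusterWeight w xbar v ≤ |u - v| := by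
      rintro u v ⟨i, rfl⟩ ⟨j, rfl⟩ huv
      exact h1 i j huv
    have hG3 : ∀ a b, (∃ i, xbar i = a) → (∃ i, xbar i = b) → a ≠ b → |a - b| < 2 →
        clusterWeight w xbar a < clusterWeight w xbar b →
        (1 ≤ clusterWeight w xbar b * |a - b| /
            (clusterWeight w xbar a + clusterWeight w xbar b + δ) -
            δ / clusterWeight w xbar a ∧
        (clusterWeight w xbar a * |a - b| + δ) /
            (clusterWeight w xbar a + clusterWeight w xbar b) +
            δ / clusterWeight w xbar b < 1) := by
      rintro a b ⟨i, rfl⟩ ⟨j, rfl⟩ hab hd hW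
      exact h3 i j ⟨hab, hd, hW⟩
    exact delta_bound w xbar hw δ x0 hpos hG1 hG3 hne2
  · have ht : Filter.Tendsto
        (fun δ : ℝ => (∑ i, w i * (2 / clusterWeight w xbar (xbar i))) * δ)
        (nhdsWithin 0 (Set.Ioi 0))
        (nhds ((∑ i, w i * (2 / clusterWeight w xbar (xbar i))) * 0)) :=
      tendsto_const_nhds.mul hid
    rwa [mul_zero] at ht
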